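/- Fix k ≥ 1 and r ≥ 1. Two nonempty words in the alphabet {1,…,k} are called cyclically equivalent if one is a cyclic rotation of the other; choose a set W consisting of exactly one representative of each cyclic-equivalence class of nonempty words of length ≤ r. Then there exists N such that for all n ≥ N the following family of functions (M_n(ℂ))^k → ℂ is linearly independent over ℂ: for each finite multiset {w₁, …, w_l} of elements of W (possibly empty) whose total length |w₁| + ⋯ + |w_l| is ≤ r, the function (A₁,…,A_k) ↦ ∏_{j=1}^{l} Tr(A_{w_j(1)} ⋯ A_{w_j(|w_j|)}) (the empty multiset giving the constant function 1). -/

import Mathlib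

noncomputable section
open scoped Classical

/-- The product of trace functions associated to a multiset `s` of words in letters `1,…,k`:
`(A₁,…,A_k) ↦ ∏_{w ∈ s} Tr(A_{w(1)} ⋯ A_{w(|w|)})`. -/
def traceProdFn (n k : ℕ) (s : Multiset (List (Fin k))) :
    (Fin k → Matrix (Fin n) (Fin n) ℂ) → ℂ :=
  fun A => (s.map fun w => Matrix.trace (w.map A).prod).prod

namespace Stmt10

variable {k : ℕ}

/-- next-position function on ℕ for a list of blocks (words). -/
def nxtN : List (List (Fin k)) → ℕ → ℕ
  | [], t => t
  | w :: L, t => if t < w.length then (t + 1) % w.length else w.length + nxtN L (t - w.length)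

/-- label function -/
def labN (d : Fin k) : List (List (Fin k)) → ℕ → Fin k
  | [], _ => d
  | w :: L, t => if h : t < w.length then w.get ⟨t, h⟩ else labN d L (t - w.length)

/-- total length -/
def tot (L : List (List (Fin k))) : ℕ := (L.map List.length).sum

/-- offset of block j -/
def off (L : List (List (Fin k))) (j : ℕ) : ℕ := ((L.take j).map List.length).sum

@[simp] lemma tot_nil : tot ([] : List (List (Fin k))) = 0 := rfl
@[simp] lemma tot_cons (w : List (Fin k)) (L) : tot (w :: L) = w.length + tot L := rfl
@[simp] lemma off_zero (L : List (List (Fin k))) : off L 0 = 0 := rfl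
@[simp] lemma off_cons_succ (w : List (Fin k)) (L) (j : ℕ) :
    off (w :: L) (j + 1) = w.length + off L j := rfl

lemma nxtN_lt : ∀ (L : List (List (Fin k))) (t : ℕ), t < tot L → nxtN L t < tot L
  | [], t, ht => by simp [tot] at ht
  | w :: L, t, ht => by
    rw [nxtN]
    split
    · rename_i h
      calc (t+1) % w.length < w.length := Nat.mod_lt _ (by omega)
        _ ≤ tot (w :: L) := by simp
    · rename_i h
      have := nxtN_lt L (t - w.length) (by simp at ht; omega)
      simp only [tot_cons]; omega

lemma nxtN_ge : ∀ (L : List (List (Fin k))) (t : ℕ), tot L ≤ t → nxtN L t = t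
  | [], t, _ => rfl
  | w :: L, t, ht => by
    rw [nxtN]
    simp only [tot_cons] at ht
    rw [if_neg (by omega)]
    rw [nxtN_ge L (t - w.length) (by omega)]
    omega

lemma off_add_lt : ∀ (L : List (List (Fin k))) (j : ℕ) (hj : j < L.length) (i : ℕ),
    i < (L.get ⟨j, hj⟩).length → off L j + i < tot L
  | [], j, hj, i, hi => by simp at hj
  | w :: L, 0, hj, i, hi => by simp at hi ⊢; omega
  | w :: L, j + 1, hj, i, hi => by
    simp only [List.length_cons, Nat.add_lt_add_iff_right] at hj
    have := off_add_lt L j hj i (by simpa using hi)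
    simp only [off_cons_succ, tot_cons]; omega

lemma block_nxt : ∀ (L : List (List (Fin k))) (j : ℕ) (hj : j < L.length) (i : ℕ),
    i < (L.get ⟨j, hj⟩).length →
    nxtN L (off L j + i) = off L j + (i + 1) % (L.get ⟨j, hj⟩).length
  | [], j, hj, i, hi => by simp at hj
  | w :: L, 0, hj, i, hi => by
    simp only [List.get] at hi ⊢
    rw [off_zero, Nat.zero_add, nxtN, if_pos hi, Nat.zero_add]
  | w :: L, j + 1, hj, i, hi => by
    simp only [List.length_cons, Nat.add_lt_add_iff_right] at hj
    simp only [List.get] at hi ⊢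
    rw [off_cons_succ, nxtN, if_neg (by omega)]
    have : w.length + off L j + i - w.length = off L j + i := by omega
    rw [this, block_nxt L j hj i hi]
    omega

lemma block_lab (d : Fin k) : ∀ (L : List (List (Fin k))) (j : ℕ) (hj : j < L.length) (i : ℕ)
    (hi : i < (L.get ⟨j, hj⟩).length),
    labN d L (off L j + i) = (L.get ⟨j, hj⟩).get ⟨i, hi⟩
  | [], j, hj, i, hi => by simp at hj
  | w :: L, 0, hj, i, hi => by
    simp only [List.get] at hi ⊢
    rw [off_zero, Nat.zero_add, labN, dif_pos hi]
  | w :: L, j + 1, hj, i, hi => by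
    simp only [List.length_cons, Nat.add_lt_add_iff_right] at hj
    simp only [List.get] at hi ⊢
    rw [off_cons_succ, labN, dif_neg (by omega)]
    have : w.length + off L j + i - w.length = off L j + i := by omega
    rw [this, block_lab d L j hj i hi]

lemma block_decomp : ∀ (L : List (List (Fin k))) (t : ℕ), t < tot L →
    (∀ w ∈ L, w ≠ []) →
    ∃ (j : ℕ) (hj : j < L.length) (i : ℕ), i < (L.get ⟨j, hj⟩).length ∧ t = off L j + i
  | [], t, ht, _ => by simp [tot] at ht
  | w :: L, t, ht, hne => by
    by_cases h : t < w.length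
    · exact ⟨0, by simp, t, by simpa using h, by simp⟩
    · obtain ⟨j, hj, i, hi, hti⟩ := block_decomp L (t - w.length) (by simp at ht; omega)
        (fun w' hw' => hne w' (List.mem_cons_of_mem _ hw'))
      exact ⟨j + 1, by simpa using hj, i, by simpa using hi, by simp; omega⟩

lemma off_succ_get (L : List (List (Fin k))) (j : ℕ) (hj : j < L.length) :
    off L (j + 1) = off L j + (L.get ⟨j, hj⟩).length := by
  unfold off
  rw [List.map_take, List.map_take, List.sum_take_succ _ j (by simpa using hj)]
  simp

lemma off_le_succ (L : List (List (Fin k))) (j : ℕ) : off L j ≤ off L (j + 1) := by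
  by_cases h : j < L.length
  · rw [off_succ_get L j h]; omega
  · unfold off
    rw [List.take_of_length_le (by omega), List.take_of_length_le (by omega)]

lemma off_mono (L : List (List (Fin k))) {j j' : ℕ} (h : j ≤ j') : off L j ≤ off L j' := by
  induction j' with
  | zero => have : j = 0 := by omega
            subst this; exact le_refl _
  | succ c ih =>
    rcases Nat.lt_or_ge j (c+1) with h' | h'
    · exact le_trans (ih (by omega)) (off_le_succ L c)
    · have : j = c + 1 := by omega
      subst this; exact le_refl _

lemma block_disjoint (L : List (List (Fin k))) {j j' i i' : ℕ} (hj : j < L.length)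
    (hj' : j' < L.length) (hi : i < (L.get ⟨j, hj⟩).length) (hi' : i' < (L.get ⟨j', hj'⟩).length)
    (heq : off L j + i = off L j' + i') : j = j' ∧ i = i' := by
  have key : ∀ {a b ia : ℕ} (ha : a < L.length) (hb : b < L.length), a < b →
      ia < (L.get ⟨a, ha⟩).length → off L a + ia < off L b := by
    intro a b ia ha hb hab hia
    calc off L a + ia < off L a + (L.get ⟨a, ha⟩).length := by omega
      _ = off L (a + 1) := (off_succ_get L a ha).symm
      _ ≤ off L b := off_mono L (by omega)
  rcases lt_trichotomy j j' with h | h | h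
  · exact absurd heq (by have := key hj hj' h hi; omega)

  · subst h; exact ⟨rfl, by omega⟩
  · exact absurd heq.symm (by have := key hj' hj h hi'; omega)


section Generic
variable {n : ℕ} (nx : Fin n → Fin n) (lb : Fin n → Fin k)

/-- exponent of the monomial traced along the orbit of `u` reading word `w`. -/
def Ew : List (Fin k) → Fin n → (Fin n →₀ ℕ)
  | [], _ => 0
  | _ :: w, u => Finsupp.single u 1 + Ew w (nx u)

/-- labels along the orbit of `u` spell the word `w`. -/
def labOK : List (Fin k) → Fin n → Prop
  | [], _ => True
  | a :: w, u => lb u = a ∧ labOK w (nx u)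

/-- generic matrices adapted to the configuration. -/
def Apoly : Fin k → Matrix (Fin n) (Fin n) (MvPolynomial (Fin n) ℂ) := fun i =>
  Matrix.of fun u v => if lb u = i ∧ v = nx u then MvPolynomial.X u else 0

lemma entry_lemma : ∀ (w : List (Fin k)) (u v : Fin n),
    ((w.map (Apoly nx lb)).prod) u v =
      if v = nx^[w.length] u ∧ labOK nx lb w u then
        MvPolynomial.monomial (Ew nx w u) 1 else 0
  | [], u, v => by
    simp only [List.map_nil, List.prod_nil, Matrix.one_apply, List.length_nil,
      Function.iterate_zero, id_eq, labOK, and_true, Ew]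
    by_cases h : u = v
    · subst h; rw [if_pos rfl, if_pos rfl]; simp
    · rw [if_neg h, if_neg (fun hc => h (hc.symm))]
  | a :: w, u, v => by
    rw [List.map_cons, List.prod_cons, Matrix.mul_apply]
    rw [Finset.sum_eq_single (nx u)]
    · rw [entry_lemma w (nx u) v]
      show (if lb u = a ∧ nx u = nx u then MvPolynomial.X u else 0) * _ = _
      rw [List.length_cons, Function.iterate_succ_apply]
      by_cases h1 : lb u = a
      · by_cases h2 : v = nx^[w.length] (nx u)
        · by_cases h3 : labOK nx lb w (nx u)
          · rw [if_pos ⟨h1, rfl⟩, if_pos ⟨h2, h3⟩, if_pos ⟨h2, h1, h3⟩]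
            show _ = MvPolynomial.monomial (Finsupp.single u 1 + Ew nx w (nx u)) (1:ℂ)
            rw [MvPolynomial.monomial_single_add, pow_one]
          · rw [if_pos ⟨h1, rfl⟩, if_neg (fun hc => h3 hc.2), mul_zero,
              if_neg (fun hc => h3 hc.2.2)]
        · rw [if_pos ⟨h1, rfl⟩, if_neg (fun hc => h2 hc.1), mul_zero,
            if_neg (fun hc => h2 hc.1)]
      · rw [if_neg (fun hc => h1 hc.1), zero_mul, if_neg (fun hc => h1 hc.2.1)]
    · intro b _ hb
      simp only [Apoly, Matrix.of_apply]
      rw [if_neg (fun hc => hb hc.2), zero_mul]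
    · intro h; exact absurd (Finset.mem_univ _) h

lemma trace_lemma (w : List (Fin k)) :
    Matrix.trace ((w.map (Apoly nx lb)).prod) =
      ∑ u : Fin n, if u = nx^[w.length] u ∧ labOK nx lb w u then
        MvPolynomial.monomial (Ew nx w u) 1 else 0 := by
  rw [Matrix.trace]
  exact Finset.sum_congr rfl fun u _ => entry_lemma nx lb w u u

lemma Ew_mass : ∀ (w : List (Fin k)) (u : Fin n), (∑ t : Fin n, Ew nx w u t) = w.length
  | [], u => by simp [Ew]
  | a :: w, u => by
    have h : Ew nx (a :: w) u = Finsupp.single u 1 + Ew nx w (nx u) := rfl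
    rw [h]
    simp only [Finsupp.add_apply, Finset.sum_add_distrib, Ew_mass w (nx u)]
    have h2 : (∑ t : Fin n, (Finsupp.single u 1 : Fin n →₀ ℕ) t) = 1 := by
      simp [Finsupp.single_apply]
    rw [h2, List.length_cons]
    omega

lemma Ew_self_pos (w : List (Fin k)) (hw : w ≠ []) (u : Fin n) : 1 ≤ Ew nx w u u := by
  match w with
  | a :: w =>
    have h : Ew nx (a :: w) u = Finsupp.single u 1 + Ew nx w (nx u) := rfl
    rw [h, Finsupp.add_apply, Finsupp.single_apply, if_pos rfl]
    omega

lemma Ew_support : ∀ (w : List (Fin k)) (u t : Fin n), Ew nx w u t ≠ 0 →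
    ∃ j, j < w.length ∧ nx^[j] u = t
  | [], u, t, h => by simp [Ew] at h
  | a :: w, u, t, h => by
    rw [show Ew nx (a :: w) u = Finsupp.single u 1 + Ew nx w (nx u) from rfl,
      Finsupp.add_apply] at h
    by_cases h1 : Ew nx w (nx u) t ≠ 0
    · obtain ⟨j, hj, hjt⟩ := Ew_support w (nx u) t h1
      exact ⟨j + 1, by simp; omega, by rwa [Function.iterate_succ_apply]⟩
    · push_neg at h1
      rw [h1, Nat.add_zero, Finsupp.single_apply] at h
      refine ⟨0, by simp, ?_⟩
      simp only [Function.iterate_zero, id_eq]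
      by_contra hc
      rw [if_neg hc] at h
      exact h rfl

end Generic

section Config
variable (L : List (List (Fin k))) {n : ℕ}

/-- next-position function on `Fin n`. -/
def nxtF (hn : tot L ≤ n) : Fin n → Fin n := fun t =>
  ⟨nxtN L t.val, by
    rcases Nat.lt_or_ge t.val (tot L) with h | h
    · exact lt_of_lt_of_le (nxtN_lt L _ h) hn
    · rw [nxtN_ge L _ h]; exact t.isLt⟩

/-- label function on `Fin n`. -/
def labF (d : Fin k) : Fin n → Fin k := fun t => labN d L t.val

/-- the vertex of block `j`, position `c`. -/
def vtx (hn : tot L ≤ n) (j : Fin L.length) (c : Fin (L.get j).length) : Fin n :=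
  ⟨off L j.val + c.val, lt_of_lt_of_le (off_add_lt L j.val j.isLt c.val c.isLt) hn⟩

variable (hn : tot L ≤ n)

lemma vtx_inj {j j' : Fin L.length} {c : Fin (L.get j).length} {c' : Fin (L.get j').length}
    (h : vtx L hn j c = vtx L hn j' c') : j.val = j'.val ∧ c.val = c'.val := by
  have := congrArg Fin.val h
  simp only [vtx] at this
  exact block_disjoint L j.isLt j'.isLt c.isLt c'.isLt this

lemma nxtF_vtx (j : Fin L.length) (c : Fin (L.get j).length) :
    nxtF L hn (vtx L hn j c) =
      vtx L hn j ⟨(c.val + 1) % (L.get j).length, Nat.mod_lt _ c.pos⟩ := by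
  apply Fin.ext
  simp only [nxtF, vtx]
  exact block_nxt L j.val j.isLt c.val c.isLt

lemma nxtF_iterate (j : Fin L.length) (c : Fin (L.get j).length) (a : ℕ) :
    (nxtF L hn)^[a] (vtx L hn j c) =
      vtx L hn j ⟨(c.val + a) % (L.get j).length, Nat.mod_lt _ c.pos⟩ := by
  induction a generalizing c with
  | zero =>
    simp only [Function.iterate_zero, id_eq]
    congr 1
    apply Fin.ext
    exact (Nat.mod_eq_of_lt c.isLt).symm
  | succ a ih =>
    rw [Function.iterate_succ_apply, nxtF_vtx L hn j c, ih]
    congr 1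
    apply Fin.ext
    show ((c.val + 1) % _ + a) % _ = (c.val + (a + 1)) % _
    conv_rhs => rw [show c.val + (a + 1) = (c.val + 1) + a by omega]
    rw [Nat.mod_add_mod]

lemma labF_vtx (d : Fin k) (j : Fin L.length) (c : Fin (L.get j).length) :
    labF L d (vtx L hn j c) = (L.get j).get c := by
  simp only [labF, vtx]
  exact block_lab d L j.val j.isLt c.val c.isLt

lemma nxtF_high (t : Fin n) (ht : tot L ≤ t.val) : nxtF L hn t = t := by
  apply Fin.ext; exact nxtN_ge L t.val ht

/-- the target squarefree exponent -/
def muF (hn : tot L ≤ n) : Fin n →₀ ℕ :=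
  ∑ j : Fin L.length, ∑ c : Fin (L.get j).length, Finsupp.single (vtx L hn j c) 1

lemma muF_apply_zero (t : Fin n) (ht : ∀ (j : Fin L.length) (c : Fin (L.get j).length),
    vtx L hn j c ≠ t) : muF L hn t = 0 := by
  rw [muF, Finsupp.finset_sum_apply]
  refine Finset.sum_eq_zero fun j _ => ?_
  rw [Finsupp.finset_sum_apply]
  refine Finset.sum_eq_zero fun c _ => ?_
  rw [Finsupp.single_apply, if_neg (ht j c)]

lemma fixed_dvd {j : Fin L.length} {c : Fin (L.get j).length} {a : ℕ}
    (h : (nxtF L hn)^[a] (vtx L hn j c) = vtx L hn j c) : (L.get j).length ∣ a := by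
  rw [nxtF_iterate] at h
  have h2 := (vtx_inj L hn h).2
  simp only at h2
  have : c.val ≡ c.val + a [MOD (L.get j).length] := by
    unfold Nat.ModEq
    rw [h2, Nat.mod_eq_of_lt c.isLt]
  have h3 := (Nat.modEq_iff_dvd' (by omega)).1 this
  have h4 : c.val + a - c.val = a := by omega
  rwa [h4] at h3

lemma dvd_fixed {j : Fin L.length} {c : Fin (L.get j).length} {a : ℕ}
    (h : (L.get j).length ∣ a) : (nxtF L hn)^[a] (vtx L hn j c) = vtx L hn j c := by
  rw [nxtF_iterate]
  congr 1
  apply Fin.ext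
  show (c.val + a) % _ = c.val
  obtain ⟨q, rfl⟩ := h
  rw [Nat.add_mul_mod_self_left]
  exact Nat.mod_eq_of_lt c.isLt

lemma labOK_iff_prefix (d : Fin k) (j : Fin L.length) :
    ∀ (w' : List (Fin k)) (c : Fin (L.get j).length), w'.length ≤ (L.get j).length →
      (labOK (nxtF L hn) (labF L d) w' (vtx L hn j c) ↔ w' <+: ((L.get j).rotate c.val))
  | [], c, _ => by simp [labOK]
  | a :: w'', c, hlen => by
    have hpos : 0 < (L.get j).length := c.pos
    have hgT : (L.get j).rotate c.val =
        (L.get j).get c :: ((L.get j).drop (c.val + 1) ++ (L.get j).take c.val) := by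
      rw [List.rotate_eq_drop_append_take (le_of_lt c.isLt),
        List.drop_eq_getElem_cons c.isLt, List.cons_append]
      simp
    set g := (L.get j).get c with hgdef
    set T := ((L.get j).drop (c.val + 1) ++ (L.get j).take c.val) with hTdef
    have hTlen : T.length + 1 = (L.get j).length := by
      rw [hTdef]
      simp only [List.length_append, List.length_drop, List.length_take]
      have := c.isLt
      omega
    have hrot1 : (L.get j).rotate ((c.val + 1) % (L.get j).length) = T ++ [g] := by
      rw [List.rotate_mod, ← List.rotate_rotate, hgT]
      simpa using List.rotate_cons_succ T g 0
    have hlen' : w''.length ≤ (L.get j).length := by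
      simp only [List.length_cons] at hlen; omega
    constructor
    · rintro ⟨hlab, hOK⟩
      rw [hgT, List.cons_prefix_cons]
      constructor
      · rw [labF_vtx] at hlab; rw [← hlab]
      · rw [nxtF_vtx] at hOK
        have hih := (labOK_iff_prefix d j w''
          ⟨(c.val + 1) % (L.get j).length, Nat.mod_lt _ hpos⟩ hlen').1 hOK
        rw [hrot1] at hih
        have hl : w''.length ≤ T.length := by
          simp only [List.length_cons] at hlen; omega
        rw [List.prefix_iff_eq_take] at hih ⊢
        rwa [List.take_append_of_le_length hl] at hih
    · intro hpre
      rw [hgT, List.cons_prefix_cons] at hpre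
      obtain ⟨ha, hpre⟩ := hpre
      refine ⟨?_, ?_⟩
      · rw [labF_vtx]; exact ha.symm
      · rw [nxtF_vtx]
        refine (labOK_iff_prefix d j w''
          ⟨(c.val + 1) % (L.get j).length, Nat.mod_lt _ hpos⟩ hlen').2 ?_
        rw [hrot1]
        exact hpre.trans (List.prefix_append T [g])

lemma Ew_canon (j : Fin L.length) :
    ∀ (w' : List (Fin k)) (c : Fin (L.get j).length), c.val + w'.length ≤ (L.get j).length →
      Ew (nxtF L hn) w' (vtx L hn j c) =
        ∑ c' ∈ Finset.univ.filter
            (fun c' : Fin (L.get j).length => c.val ≤ c'.val ∧ c'.val < c.val + w'.length),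
          Finsupp.single (vtx L hn j c') 1
  | [], c, _ => by
    have : (Finset.univ.filter
        (fun c' : Fin (L.get j).length =>
          c.val ≤ c'.val ∧ c'.val < c.val + ([] : List (Fin k)).length)) = ∅ := by
      apply Finset.filter_false_of_mem
      intro c' _
      simp only [List.length_nil]
      omega
    rw [this]
    simp [Ew]
  | a :: w'', c, hle => by
    have hpos : 0 < (L.get j).length := c.pos
    have hEw : Ew (nxtF L hn) (a :: w'') (vtx L hn j c)
        = Finsupp.single (vtx L hn j c) 1
          + Ew (nxtF L hn) w'' (nxtF L hn (vtx L hn j c)) := rfl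
    rw [hEw, nxtF_vtx]
    simp only [List.length_cons] at hle
    by_cases hc1 : c.val + 1 < (L.get j).length
    · have hEq : (⟨(c.val + 1) % (L.get j).length, Nat.mod_lt _ c.pos⟩ :
          Fin (L.get j).length) = ⟨c.val + 1, hc1⟩ := Fin.ext (Nat.mod_eq_of_lt hc1)
      rw [hEq, Ew_canon j w'' ⟨c.val + 1, hc1⟩
        (by show c.val + 1 + w''.length ≤ (L.get j).length; omega)]
      have hins : (Finset.univ.filter (fun c' : Fin (L.get j).length =>
            c.val ≤ c'.val ∧ c'.val < c.val + (a :: w'').length))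
          = insert c (Finset.univ.filter (fun c' : Fin (L.get j).length =>
            c.val + 1 ≤ c'.val ∧ c'.val < c.val + 1 + w''.length)) := by
        ext c'
        simp only [Finset.mem_insert, Finset.mem_filter, Finset.mem_univ, true_and,
          List.length_cons, Fin.ext_iff]
        omega
      rw [hins, Finset.sum_insert (by simp)]
    · have hw'' : w'' = [] := List.eq_nil_of_length_eq_zero (by omega)
      subst hw''
      have hsingle : (Finset.univ.filter (fun c' : Fin (L.get j).length =>
            c.val ≤ c'.val ∧ c'.val < c.val + ([a] : List (Fin k)).length)) = {c} := by
        ext c'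
        simp only [Finset.mem_singleton, Finset.mem_filter, Finset.mem_univ, true_and,
          List.length_cons, List.length_nil, Fin.ext_iff]
        omega
      rw [hsingle, Finset.sum_singleton]
      simp [Ew]

lemma mu_eq_sum (hne : ∀ j : Fin L.length, 0 < (L.get j).length) :
    muF L hn = ∑ j : Fin L.length,
      Ew (nxtF L hn) (L.get j) (vtx L hn j ⟨0, hne j⟩) := by
  rw [muF]
  refine Finset.sum_congr rfl fun j _ => ?_
  rw [Ew_canon L hn j (L.get j) ⟨0, hne j⟩
    (by show 0 + (L.get j).length ≤ (L.get j).length; omega)]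
  have : (Finset.univ.filter (fun c' : Fin (L.get j).length =>
      (0:ℕ) ≤ c'.val ∧ c'.val < 0 + (L.get j).length)) = Finset.univ := by
    apply Finset.filter_true_of_mem
    intro c' _
    have := c'.isLt
    omega
  rw [this]

/-- the vertex set of block `j` -/
def blockSet (j : Fin L.length) : Finset (Fin n) :=
  Finset.image (fun c => vtx L hn j c) Finset.univ

lemma mem_blockSet_iff {j j' : Fin L.length} {c' : Fin (L.get j').length} :
    vtx L hn j' c' ∈ blockSet L hn j ↔ j' = j := by
  constructor
  · intro h
    obtain ⟨c, _, hc⟩ := Finset.mem_image.1 h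
    exact Fin.ext (vtx_inj L hn hc).1.symm
  · rintro rfl
    exact Finset.mem_image.2 ⟨c', Finset.mem_univ _, rfl⟩

lemma sum_mu_block (j : Fin L.length) :
    (∑ t ∈ blockSet L hn j, muF L hn t) = (L.get j).length := by
  have expand : ∀ t, muF L hn t = ∑ j' : Fin L.length,
      ∑ c' : Fin (L.get j').length, Finsupp.single (vtx L hn j' c') 1 t := by
    intro t
    rw [muF, Finsupp.finset_sum_apply]
    exact Finset.sum_congr rfl fun j' _ => Finsupp.finset_sum_apply ..
  calc (∑ t ∈ blockSet L hn j, muF L hn t)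
      = ∑ j' : Fin L.length, ∑ c' : Fin (L.get j').length,
          ∑ t ∈ blockSet L hn j, Finsupp.single (vtx L hn j' c') 1 t := by
        rw [Finset.sum_congr rfl fun t _ => expand t, Finset.sum_comm]
        exact Finset.sum_congr rfl fun j' _ => Finset.sum_comm
    _ = ∑ j' : Fin L.length, ∑ c' : Fin (L.get j').length,
          if j' = j then 1 else 0 := by
        refine Finset.sum_congr rfl fun j' _ => Finset.sum_congr rfl fun c' _ => ?_
        have : ∀ t, (Finsupp.single (vtx L hn j' c') (1:ℕ)) t
            = if vtx L hn j' c' = t then 1 else 0 := fun t => Finsupp.single_apply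
        rw [Finset.sum_congr rfl fun t _ => this t, Finset.sum_ite_eq]
        by_cases h : j' = j
        · rw [if_pos ((mem_blockSet_iff L hn).2 h), if_pos h]
        · rw [if_neg (fun hc => h ((mem_blockSet_iff L hn).1 hc)), if_neg h]
    _ = (L.get j).length := by
        rw [Finset.sum_eq_single j]
        · simp
        · intro j' _ hj'
          rw [Finset.sum_eq_zero fun c' _ => if_neg hj']
        · intro h; exact absurd (Finset.mem_univ _) h

lemma sum_Ew_block_self (j : Fin L.length) (c : Fin (L.get j).length) (w' : List (Fin k)) :
    (∑ t ∈ blockSet L hn j, Ew (nxtF L hn) w' (vtx L hn j c) t) = w'.length := by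
  rw [← Ew_mass (nxtF L hn) w' (vtx L hn j c)]
  apply Finset.sum_subset (Finset.subset_univ _)
  intro t _ ht
  by_contra hne
  obtain ⟨a, _, ha⟩ := Ew_support (nxtF L hn) w' (vtx L hn j c) t hne
  rw [nxtF_iterate] at ha
  exact ht (ha ▸ (mem_blockSet_iff L hn).2 rfl)

lemma sum_Ew_block_other {j j' : Fin L.length} (hjj : j' ≠ j)
    (c : Fin (L.get j').length) (w' : List (Fin k)) :
    (∑ t ∈ blockSet L hn j, Ew (nxtF L hn) w' (vtx L hn j' c) t) = 0 := by
  apply Finset.sum_eq_zero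
  intro t ht
  by_contra hne
  obtain ⟨a, _, ha⟩ := Ew_support (nxtF L hn) w' (vtx L hn j' c) t hne
  rw [nxtF_iterate] at ha
  rw [← ha] at ht
  exact hjj ((mem_blockSet_iff L hn).1 ht)

end Config

section Expand
variable {n : ℕ} (nx : Fin n → Fin n) (lb : Fin n → Fin k)

/-- trace polynomial of a word -/
def TrP (w : List (Fin k)) : MvPolynomial (Fin n) ℂ :=
  Matrix.trace ((w.map (Apoly nx lb)).prod)

/-- a valid assignment of starting points -/
def good (L' : List (List (Fin k))) (μ : Fin n →₀ ℕ) (p : Fin L'.length → Fin n) : Prop :=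
  (∀ i, p i = nx^[(L'.get i).length] (p i) ∧ labOK nx lb (L'.get i) (p i)) ∧
    (∑ i, Ew nx (L'.get i) (p i)) = μ

lemma prod_ite_monomial {ι : Type} (s : Finset ι) (P : ι → Prop) [DecidablePred P]
    (e : ι → (Fin n →₀ ℕ)) :
    (∏ i ∈ s, if P i then (MvPolynomial.monomial (e i) (1:ℂ)) else 0)
      = if (∀ i ∈ s, P i) then MvPolynomial.monomial (∑ i ∈ s, e i) (1:ℂ) else 0 := by
  induction s using Finset.cons_induction with
  | empty => simp
  | cons a s ha ih =>
    rw [Finset.prod_cons, ih, Finset.sum_cons]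
    by_cases hP : P a
    · by_cases hall : ∀ i ∈ s, P i
      · rw [if_pos hP, if_pos hall, MvPolynomial.monomial_mul, one_mul,
          if_pos (by intro i hi; rcases Finset.mem_cons.1 hi with rfl | h; exacts [hP, hall i h])]
      · rw [if_pos hP, if_neg hall, mul_zero,
          if_neg (fun hc => hall (fun i hi => hc i (Finset.mem_cons_of_mem hi)))]
    · rw [if_neg hP, zero_mul,
        if_neg (fun hc => hP (hc a (Finset.mem_cons_self a s)))]

lemma coeff_prod_TrP (L' : List (List (Fin k))) (μ : Fin n →₀ ℕ) :
    MvPolynomial.coeff μ ((L'.map (TrP nx lb)).prod)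
      = ((Fintype.piFinset (fun _ : Fin L'.length => (Finset.univ : Finset (Fin n)))).filter
          (good nx lb L' μ)).card := by
  have h1 : (L'.map (TrP nx lb)).prod = ∏ i : Fin L'.length, TrP nx lb (L'.get i) := by
    conv_lhs => rw [← List.map_get_finRange L']
    rw [List.map_map, Finset.prod_eq_multiset_prod]
    rfl
  rw [h1]
  unfold TrP
  rw [Finset.prod_congr rfl fun i _ => trace_lemma nx lb (L'.get i)]
  rw [Finset.prod_univ_sum]
  rw [MvPolynomial.coeff_sum]
  have h2 : ∀ p : Fin L'.length → Fin n,
      MvPolynomial.coeff μ (∏ i : Fin L'.length,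
        if p i = nx^[(L'.get i).length] (p i) ∧ labOK nx lb (L'.get i) (p i) then
          MvPolynomial.monomial (Ew nx (L'.get i) (p i)) (1:ℂ) else 0)
      = if good nx lb L' μ p then 1 else 0 := by
    intro p
    rw [prod_ite_monomial Finset.univ
      (fun i => p i = nx^[(L'.get i).length] (p i) ∧ labOK nx lb (L'.get i) (p i))
      (fun i => Ew nx (L'.get i) (p i))]
    rw [apply_ite (MvPolynomial.coeff μ), MvPolynomial.coeff_monomial,
      MvPolynomial.coeff_zero]
    by_cases hA : ∀ i ∈ Finset.univ, p i = nx^[(L'.get i).length] (p i) ∧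
        labOK nx lb (L'.get i) (p i)
    · rw [if_pos hA]
      by_cases hB : (∑ i, Ew nx (L'.get i) (p i)) = μ
      · rw [if_pos hB, if_pos ⟨fun i => hA i (Finset.mem_univ i), hB⟩]
      · rw [if_neg hB, if_neg (fun hc => hB hc.2)]
    · rw [if_neg hA, if_neg (fun hc => hA (fun i _ => hc.1 i))]
  trans (∑ p ∈ Fintype.piFinset (fun _ : Fin L'.length => (Finset.univ : Finset (Fin n))),
    if good nx lb L' μ p then (1:ℂ) else 0)
  · exact Finset.sum_congr rfl fun p _ => h2 p
  · rw [Finset.sum_boole]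

end Expand

section Main

lemma count_unique (r : ℕ) (W : Set (List (Fin k)))
    (L L' : List (List (Fin k))) {n : ℕ} (hn : tot L ≤ n) (d : Fin k)
    (hLW : ∀ w ∈ L, w ∈ W) (hL'W : ∀ w ∈ L', w ∈ W)
    (hWne : ∀ w ∈ W, w ≠ []) (hWlen : ∀ w ∈ W, w.length ≤ r)
    (hWrep : ∀ w : List (Fin k), w ≠ [] → w.length ≤ r →
      ∃! w' : List (Fin k), w' ∈ W ∧ List.IsRotated w w')
    (p : Fin L'.length → Fin n)
    (hgood : good (nxtF L hn) (labF L d) L' (muF L hn) p) :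
    (L' : Multiset (List (Fin k))) = (L : Multiset (List (Fin k))) := by
  obtain ⟨hcond, hsum⟩ := hgood
  have hLne : ∀ j : Fin L.length, 0 < (L.get j).length := fun j =>
    List.length_pos_of_ne_nil (hWne _ (hLW _ (List.get_mem L j)))
  have hL'ne : ∀ i : Fin L'.length, 0 < (L'.get i).length := fun i =>
    List.length_pos_of_ne_nil (hWne _ (hL'W _ (List.get_mem L' i)))
  -- step 1: each starting point is a vertex of some block
  have hvert : ∀ i : Fin L'.length, ∃ (j : Fin L.length) (c : Fin (L.get j).length),
      p i = vtx L hn j c := by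
    intro i
    by_contra hno
    push_neg at hno
    have h0 : muF L hn (p i) = 0 :=
      muF_apply_zero L hn (p i) (fun j c hc => hno j c hc.symm)
    have h1 : 1 ≤ (∑ i', Ew (nxtF L hn) (L'.get i') (p i')) (p i) := by
      rw [Finsupp.finset_sum_apply]
      calc 1 ≤ Ew (nxtF L hn) (L'.get i) (p i) (p i) :=
            Ew_self_pos _ _ (hWne _ (hL'W _ (List.get_mem L' i))) _
        _ ≤ _ := Finset.single_le_sum (f := fun i' => Ew (nxtF L hn) (L'.get i') (p i') (p i))
            (fun _ _ => Nat.zero_le _) (Finset.mem_univ i)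
    rw [hsum, h0] at h1
    omega
  choose φ ψ hφψ using hvert
  -- step 2: block mass count
  have hblock : ∀ j : Fin L.length,
      (∑ i ∈ Finset.univ.filter (fun i => φ i = j), (L'.get i).length)
        = (L.get j).length := by
    intro j
    have h2 := sum_mu_block L hn j
    have h3 : (∑ t ∈ blockSet L hn j, muF L hn t)
        = ∑ i : Fin L'.length, ∑ t ∈ blockSet L hn j,
            Ew (nxtF L hn) (L'.get i) (p i) t := by
      rw [← hsum, Finset.sum_congr rfl (fun t _ => Finsupp.finset_sum_apply ..),
        Finset.sum_comm]
    have h4 : ∀ i : Fin L'.length, (∑ t ∈ blockSet L hn j,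
        Ew (nxtF L hn) (L'.get i) (p i) t)
          = if φ i = j then (L'.get i).length else 0 := by
      intro i
      rw [hφψ i]
      by_cases h : φ i = j
      · subst h
        rw [if_pos rfl, sum_Ew_block_self]
      · rw [if_neg h, sum_Ew_block_other L hn h]
    rw [h3, Finset.sum_congr rfl (fun i _ => h4 i), ← Finset.sum_filter] at h2
    exact h2
  -- step 3: divisibility
  have hdvd : ∀ i, (L.get (φ i)).length ∣ (L'.get i).length := fun i => by
    have hfix := (hcond i).1
    rw [hφψ i] at hfix
    exact fixed_dvd L hn hfix.symm
  -- step 4: unique index per block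
  have huniq : ∀ j : Fin L.length, ∃! i, φ i = j := by
    intro j
    have hpos : 0 < (L.get j).length := hLne j
    have hsj := hblock j
    have hne : (Finset.univ.filter (fun i => φ i = j)).Nonempty := by
      by_contra hc
      rw [Finset.not_nonempty_iff_eq_empty] at hc
      rw [hc, Finset.sum_empty] at hsj
      omega
    obtain ⟨i0, hi0⟩ := hne
    have hφ0 : φ i0 = j := (Finset.mem_filter.1 hi0).2
    refine ⟨i0, hφ0, ?_⟩
    intro i1 hi1
    by_contra hne10
    have hsub : ({i1, i0} : Finset (Fin L'.length)) ⊆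
        Finset.univ.filter (fun i => φ i = j) := by
      intro x hx
      rcases Finset.mem_insert.1 hx with rfl | hx
      · exact Finset.mem_filter.2 ⟨Finset.mem_univ _, hi1⟩
      · rw [Finset.mem_singleton.1 hx]; exact hi0
    have hge := Finset.sum_le_sum_of_subset (f := fun i => (L'.get i).length) hsub
    rw [Finset.sum_pair hne10, hsj] at hge
    have g0 : (L.get j).length ≤ (L'.get i0).length :=
      Nat.le_of_dvd (hL'ne i0) (hφ0 ▸ hdvd i0)
    have g1 : (L.get j).length ≤ (L'.get i1).length :=
      Nat.le_of_dvd (hL'ne i1) (hi1 ▸ hdvd i1)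
    omega
  -- step 5: length equality
  have hlen_eq : ∀ i, (L'.get i).length = (L.get (φ i)).length := by
    intro i
    have h := hblock (φ i)
    have hfil : Finset.univ.filter (fun i' => φ i' = φ i) = {i} := by
      obtain ⟨i0, hi0, huni⟩ := huniq (φ i)
      ext x
      simp only [Finset.mem_filter, Finset.mem_univ, true_and, Finset.mem_singleton]
      constructor
      · intro hx
        rw [huni x hx, ← huni i rfl]
      · rintro rfl; rfl
    rw [hfil, Finset.sum_singleton] at h
    exact h
  -- step 6: words agree
  have hget : ∀ i, L'.get i = L.get (φ i) := by
    intro i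
    have hlab := (hcond i).2
    rw [hφψ i] at hlab
    have hpre := (labOK_iff_prefix L hn d (φ i) (L'.get i) (ψ i)
      (le_of_eq (hlen_eq i))).1 hlab
    have heq : L'.get i = (L.get (φ i)).rotate (ψ i).val :=
      hpre.eq_of_length (by rw [List.length_rotate]; exact hlen_eq i)
    have hrot : List.IsRotated (L.get (φ i)) (L'.get i) := ⟨(ψ i).val, heq.symm⟩
    obtain ⟨w0, hw0, huni⟩ := hWrep (L.get (φ i))
      (hWne _ (hLW _ (List.get_mem L (φ i))))
      (hWlen _ (hLW _ (List.get_mem L (φ i))))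
    have e1 := huni (L'.get i) ⟨hL'W _ (List.get_mem L' i), hrot⟩
    have e2 := huni (L.get (φ i))
      ⟨hLW _ (List.get_mem L (φ i)), List.IsRotated.refl _⟩
    rw [e1, e2]
  -- step 7: multiset equality
  have hbij : Function.Bijective φ := (Function.bijective_iff_existsUnique φ).2 huniq
  have hL'eq : L' = (List.finRange L'.length).map (fun i => L.get (φ i)) := by
    conv_lhs => rw [← List.map_get_finRange L']
    exact List.map_congr_left (fun i _ => hget i)
  have hms : (Multiset.map φ ((Finset.univ : Finset (Fin L'.length)).val))
      = ((Finset.univ : Finset (Fin L.length)).val) := by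
    have h5 := congrArg Finset.val (Finset.map_univ_equiv (Equiv.ofBijective φ hbij))
    rwa [Finset.map_val] at h5
  calc (L' : Multiset (List (Fin k)))
      = Multiset.map (fun i => L.get (φ i)) (Finset.univ.val) := by
        conv_lhs => rw [hL'eq]
        rfl
    _ = Multiset.map L.get (Multiset.map φ Finset.univ.val) := by
        rw [Multiset.map_map]
        rfl
    _ = Multiset.map L.get (Finset.univ.val) := by rw [hms]
    _ = (L : Multiset (List (Fin k))) := by
        conv_rhs => rw [← List.map_get_finRange L]
        rfl

lemma good_exists (L : List (List (Fin k))) {n : ℕ} (hn : tot L ≤ n) (d : Fin k)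
    (hLne : ∀ j : Fin L.length, 0 < (L.get j).length) :
    good (nxtF L hn) (labF L d) L (muF L hn)
      (fun j => vtx L hn j ⟨0, hLne j⟩) := by
  refine ⟨fun j => ⟨?_, ?_⟩, ?_⟩
  · exact (dvd_fixed L hn dvd_rfl).symm
  · refine (labOK_iff_prefix L hn d j (L.get j) ⟨0, hLne j⟩ (le_refl _)).2 ?_
    show L.get j <+: (L.get j).rotate (0 : ℕ)
    rw [List.rotate_zero]
  · exact (mu_eq_sum L hn hLne).symm

end Main
end Stmt10


section
open Stmt10

/-- STATEMENT 10: if `W` is a set of representatives of the cyclic-equivalence classes of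
nonempty words of length `≤ r` in `k` letters, then for all sufficiently large `n` the
products of trace functions indexed by multisets of elements of `W` of total length `≤ r`
are linearly independent functions on `k`-tuples of `n×n` matrices. -/
theorem stmt_10 (k r : ℕ) (hk : 1 ≤ k) (hr : 1 ≤ r) (W : Set (List (Fin k)))
    (hWsub : ∀ w ∈ W, w ≠ [] ∧ w.length ≤ r)
    (hWrep : ∀ w : List (Fin k), w ≠ [] → w.length ≤ r →
      ∃! w' : List (Fin k), w' ∈ W ∧ List.IsRotated w w') :
    ∃ N : ℕ, ∀ n : ℕ, N ≤ n →
      LinearIndependent ℂ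
        (fun s : {s : Multiset (List (Fin k)) //
            (∀ w ∈ s, w ∈ W) ∧ (s.map List.length).sum ≤ r} =>
          traceProdFn n k s.val) := by
  refine ⟨r, fun n hrn => ?_⟩
  rw [linearIndependent_iff']
  intro t g hrel s₀ hs₀
  set L : List (List (Fin k)) := s₀.val.toList with hLdef
  have hLcoe : (L : Multiset (List (Fin k))) = s₀.val := Multiset.coe_toList _
  have htotr : tot L ≤ r := by
    have h := s₀.prop.2
    rw [← hLcoe] at h
    simpa [tot] using h
  have hn : tot L ≤ n := le_trans htotr hrn
  set d : Fin k := ⟨0, hk⟩ with hddef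
  set nx := nxtF L hn with hnxdef
  set lb := labF L d with hlbdef
  set μ := muF L hn with hμdef
  set P : Multiset (List (Fin k)) → MvPolynomial (Fin n) ℂ :=
    fun s' => ((s'.map (fun w => Matrix.trace ((w.map (Apoly nx lb)).prod)))).prod with hPdef
  -- bridge between polynomial evaluation and the trace functions
  have hbridge : ∀ (s' : Multiset (List (Fin k))) (z : Fin n → ℂ),
      MvPolynomial.eval z (P s') = traceProdFn n k s'
        (fun i => (Apoly nx lb i).map (MvPolynomial.eval z)) := by
    intro s' z
    have hA : ∀ (w : List (Fin k)),
        (w.map (fun i => (Apoly nx lb i).map (MvPolynomial.eval z))).prod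
          = ((w.map (Apoly nx lb)).prod).map (MvPolynomial.eval z) := by
      intro w
      have h1 : w.map (fun i => (Apoly nx lb i).map (MvPolynomial.eval z))
          = (w.map (Apoly nx lb)).map ((MvPolynomial.eval z : MvPolynomial (Fin n) ℂ →+* ℂ).mapMatrix) := by
        rw [List.map_map]
        refine List.map_congr_left fun i _ => ?_
        rw [Function.comp_apply, RingHom.mapMatrix_apply]
      rw [h1, ← map_list_prod ((MvPolynomial.eval z : MvPolynomial (Fin n) ℂ →+* ℂ).mapMatrix),
        RingHom.mapMatrix_apply]
    have htr : ∀ M : Matrix (Fin n) (Fin n) (MvPolynomial (Fin n) ℂ),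
        Matrix.trace (M.map (MvPolynomial.eval z)) = MvPolynomial.eval z (Matrix.trace M) := by
      intro M
      rw [Matrix.trace, Matrix.trace, map_sum]
      rfl
    rw [hPdef, traceProdFn]
    rw [map_multiset_prod (MvPolynomial.eval z), Multiset.map_map]
    refine congrArg Multiset.prod (Multiset.map_congr rfl fun w _ => ?_)
    show MvPolynomial.eval z (Matrix.trace ((w.map (Apoly nx lb)).prod)) = _
    rw [← htr, ← hA]
  -- the polynomial relation
  have hpoly : (∑ i ∈ t, g i • P i.val) = 0 := by
    apply MvPolynomial.funext
    intro z
    rw [map_sum, map_zero]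
    have hz : ∀ i ∈ t, MvPolynomial.eval z (g i • P i.val)
        = g i • traceProdFn n k i.val
            (fun i' => (Apoly nx lb i').map (MvPolynomial.eval z)) := by
      intro i _
      rw [MvPolynomial.smul_eq_C_mul, map_mul, MvPolynomial.eval_C, hbridge, smul_eq_mul]
    rw [Finset.sum_congr rfl hz]
    have := congrFun hrel (fun i' => (Apoly nx lb i').map (MvPolynomial.eval z))
    rw [Finset.sum_apply] at this
    simpa using this
  -- coefficient extraction at μ
  have hco := congrArg (MvPolynomial.coeff μ) hpoly
  rw [MvPolynomial.coeff_sum, MvPolynomial.coeff_zero] at hco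
  have hPlist : ∀ s' : Multiset (List (Fin k)), P s' = ((s'.toList.map (TrP nx lb)).prod) := by
    intro s'
    show (Multiset.map (fun w => Matrix.trace ((w.map (Apoly nx lb)).prod)) s').prod = _
    conv_lhs => rw [← Multiset.coe_toList s']
    rw [Multiset.map_coe, Multiset.prod_coe]
    rfl
  have hWne : ∀ w ∈ W, w ≠ [] := fun w hw => (hWsub w hw).1
  have hWlen : ∀ w ∈ W, w.length ≤ r := fun w hw => (hWsub w hw).2
  have hLW : ∀ w ∈ L, w ∈ W := by
    intro w hw
    exact s₀.prop.1 w (by rwa [← hLcoe])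
  -- coefficient of other multisets vanishes
  have hzero : ∀ i ∈ t, i ≠ s₀ → MvPolynomial.coeff μ (P i.val) = 0 := by
    intro i _ hne
    rw [hPlist, coeff_prod_TrP]
    rw [Nat.cast_eq_zero, Finset.card_eq_zero, Finset.filter_eq_empty_iff]
    intro p _
    intro hgood
    have hmul := count_unique r W L i.val.toList hn d hLW
      (fun w hw => i.prop.1 w (by rwa [← Multiset.coe_toList i.val]))
      hWne hWlen hWrep p hgood
    rw [Multiset.coe_toList, hLcoe] at hmul
    exact hne (Subtype.ext hmul)
  -- coefficient of s₀ is nonzero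
  have hLne : ∀ j : Fin L.length, 0 < (L.get j).length := fun j =>
    List.length_pos_of_ne_nil (hWne _ (hLW _ (List.get_mem L j)))
  have hs₀coeff : MvPolynomial.coeff μ (P s₀.val) ≠ 0 := by
    rw [hPlist]
    have hLL : (s₀.val.toList : List (List (Fin k))) = L := rfl
    rw [hLL, coeff_prod_TrP]
    rw [Nat.cast_ne_zero, ← Nat.pos_iff_ne_zero, Finset.card_pos]
    refine ⟨fun j => vtx L hn j ⟨0, hLne j⟩, Finset.mem_filter.2 ⟨?_, ?_⟩⟩
    · exact Fintype.mem_piFinset.2 fun j => Finset.mem_univ _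
    · exact good_exists L hn d hLne
  -- conclude
  rw [Finset.sum_eq_single s₀ (fun i hi hne => by
      rw [MvPolynomial.coeff_smul, hzero i hi hne, smul_zero])
    (fun h => absurd hs₀ h)] at hco
  rw [MvPolynomial.coeff_smul, smul_eq_mul, mul_eq_zero] at hco
  exact hco.resolve_right hs₀coeff

end
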